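/- For all x, y ∈ ℝ, ∫_ℝ e^{−|x−z|} e^{−|y−z|} dz = (1 + |x−y|) e^{−|x−y|}. -/

import Mathlib

open MeasureTheory Set Real

lemma aux_exp2 (a : ℝ) : ∫ z in Ioi a, Real.exp (-(z * 2)) = 2⁻¹ * Real.exp (-(a * 2)) := by
  have h := integral_comp_mul_right_Ioi (fun x => Real.exp (-x)) a (b := 2) two_pos
  simp only [smul_eq_mul, integral_exp_neg_Ioi] at h
  exact h

lemma aux_key (d : ℝ) (hd : 0 ≤ d) :
    ∫ z : ℝ, Real.exp (-|d - z|) * Real.exp (-|z|) = (1 + d) * Real.exp (-d) := by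
  set f : ℝ → ℝ := fun z => Real.exp (-|d - z|) * Real.exp (-|z|) with hf
  have hfc : Continuous f := by continuity
  -- integrability on the three pieces
  have h1 : IntegrableOn f (Iic 0) := by
    refine (integrableOn_exp_Iic 0).mono' hfc.aestronglyMeasurable.restrict ?_
    filter_upwards [ae_restrict_mem measurableSet_Iic] with z hz
    simp only [mem_Iic] at hz
    have : f z = Real.exp (-|d - z| + -|z|) := by rw [Real.exp_add]
    rw [Real.norm_eq_abs, this, abs_of_nonneg (Real.exp_pos _).le]
    apply Real.exp_le_exp.2
    have h1 : |d - z| = d - z := abs_of_nonneg (by linarith)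
    have h2 : |z| = -z := abs_of_nonpos hz
    rw [h1, h2]; linarith
  have h2 : IntegrableOn f (Ioc 0 d) := hfc.integrableOn_Ioc
  have h3 : IntegrableOn f (Ioi d) := by
    refine (exp_neg_integrableOn_Ioi d one_pos).mono' hfc.aestronglyMeasurable.restrict ?_
    filter_upwards [ae_restrict_mem measurableSet_Ioi] with z hz
    simp only [mem_Ioi] at hz
    have : f z = Real.exp (-|d - z| + -|z|) := by rw [Real.exp_add]
    rw [Real.norm_eq_abs, this, abs_of_nonneg (Real.exp_pos _).le]
    apply Real.exp_le_exp.2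
    have h1 : |d - z| = -(d - z) := abs_of_nonpos (by linarith)
    have h2 : |z| = z := abs_of_nonneg (by linarith)
    rw [h1, h2]; linarith
  have h23 : IntegrableOn f (Ioi 0) := by
    rw [← Ioc_union_Ioi_eq_Ioi hd]
    exact h2.union h3
  -- values on the pieces
  have v1 : ∫ z in Iic 0, f z = 2⁻¹ * Real.exp (-d) := by
    have e1 : ∀ z ∈ Iic (0:ℝ), f z = (fun w => Real.exp (-(w * 2) + -d)) (-z) := by
      intro z hz
      simp only [mem_Iic] at hz
      have h1 : |d - z| = d - z := abs_of_nonneg (by linarith)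
      have h2 : |z| = -z := abs_of_nonpos hz
      simp only [hf]
      rw [h1, h2, ← Real.exp_add]
      ring_nf
    rw [setIntegral_congr_fun measurableSet_Iic e1,
      integral_comp_neg_Iic 0 (fun w => Real.exp (-(w * 2) + -d))]
    simp only [Real.exp_add, neg_zero]
    rw [integral_mul_const, aux_exp2]
    simp [mul_comm]
  have v2 : ∫ z in Ioc 0 d, f z = d * Real.exp (-d) := by
    have e2 : ∀ z ∈ Ioc (0:ℝ) d, f z = Real.exp (-d) := by
      intro z hz
      obtain ⟨hz1, hz2⟩ := hz
      have h1 : |d - z| = d - z := abs_of_nonneg (by linarith)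
      have h2 : |z| = z := abs_of_nonneg hz1.le
      simp only [hf]
      rw [h1, h2, ← Real.exp_add]
      ring_nf
    rw [setIntegral_congr_fun measurableSet_Ioc e2, setIntegral_const, measureReal_def, Real.volume_Ioc,
      sub_zero, ENNReal.toReal_ofReal hd, smul_eq_mul]
  have v3 : ∫ z in Ioi d, f z = 2⁻¹ * Real.exp (-d) := by
    have e3 : ∀ z ∈ Ioi d, f z = Real.exp d * Real.exp (-(z * 2)) := by
      intro z hz
      simp only [mem_Ioi] at hz
      have h1 : |d - z| = -(d - z) := abs_of_nonpos (by linarith)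
      have h2 : |z| = z := abs_of_nonneg (by linarith)
      simp only [hf]
      rw [h1, h2, ← Real.exp_add, ← Real.exp_add]
      ring_nf
    rw [setIntegral_congr_fun measurableSet_Ioi e3, integral_const_mul, aux_exp2]
    rw [show Real.exp d * (2⁻¹ * Real.exp (-(d * 2))) = 2⁻¹ * (Real.exp d * Real.exp (-(d*2))) from by ring, ← Real.exp_add]
    ring_nf
  have split2 : ∫ z in Ioi 0, f z = (∫ z in Ioc 0 d, f z) + ∫ z in Ioi d, f z := by
    rw [← setIntegral_union (Ioc_disjoint_Ioi le_rfl) measurableSet_Ioi h2 h3,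
      Ioc_union_Ioi_eq_Ioi hd]
  calc ∫ z : ℝ, f z = (∫ z in Iic 0, f z) + ∫ z in Ioi 0, f z :=
        (intervalIntegral.integral_Iic_add_Ioi h1 h23).symm
    _ = 2⁻¹ * Real.exp (-d) + (d * Real.exp (-d) + 2⁻¹ * Real.exp (-d)) := by
        rw [v1, split2, v2, v3]
    _ = (1 + d) * Real.exp (-d) := by ring

lemma aux_main (x y : ℝ) (hxy : y ≤ x) :
    ∫ z : ℝ, Real.exp (-|x - z|) * Real.exp (-|y - z|)
      = (1 + |x - y|) * Real.exp (-|x - y|) := by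
  have hd : 0 ≤ x - y := by linarith
  have habs : |x - y| = x - y := abs_of_nonneg hd
  have hsub : ∫ z : ℝ, Real.exp (-|x - z|) * Real.exp (-|y - z|)
      = ∫ z : ℝ, Real.exp (-|(x - y) - z|) * Real.exp (-|z|) := by
    rw [← integral_add_right_eq_self
      (fun z => Real.exp (-|x - z|) * Real.exp (-|y - z|)) y]
    congr 1
    ext z
    have e1 : x - (z + y) = (x - y) - z := by ring
    have e2 : y - (z + y) = -z := by ring
    rw [e1, e2, abs_neg]
  rw [hsub, aux_key (x - y) hd, habs]

theorem stmt_14 (x y : ℝ) :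
    ∫ z : ℝ, Real.exp (-|x - z|) * Real.exp (-|y - z|)
      = (1 + |x - y|) * Real.exp (-|x - y|) := by
  rcases le_total y x with h | h
  · exact aux_main x y h
  · have := aux_main y x h
    rw [abs_sub_comm x y]
    rw [← this]
    congr 1
    ext z
    ring
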